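/- arXiv:2108.01987 — 8 statements merged into one kernel-verified Lean document; each statement's English description precedes it below -/
import Mathlib

section
/- In the strict-preferences model (every voter submits a linear order over candidates), an election is single-top-peaked if and only if it is top-monotonic. -/
open Function

/-- In the strict-preferences model, an election is single-top-peaked (STP)
iff it is top-monotonic (TM). Voters `V`, candidates `C`, `rank v c` is the
position of candidate `c` in voter `v`'s linear order (lower = better),
`top v` is `v`'s most preferred candidate. -/
theorem stp_iff_tm {V C : Type*} [Fintype V] [Fintype C]
    (rank : V → C → ℕ) (hinj : ∀ v, Injective (rank v))
    (top : V → C) (htop : ∀ v c, c ≠ top v → rank v (top v) < rank v c) :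
    -- single-top-peaked
    (∃ f : C → ℕ, Injective f ∧ ∀ a b c : C, f a < f b → f b < f c →
        (∃ j, top j = b) → ∀ i : V,
          (top i = a → rank i b < rank i c) ∧ (top i = c → rank i b < rank i a))
    ↔
    -- top-monotonic
    (∃ f : C → ℕ, Injective f ∧
      (∀ (a b c : C) (i j : V), top i = a → top j = b →
        ((f a < f b ∧ f b < f c) ∨ (f c < f b ∧ f b < f a)) → rank i b < rank i c) ∧
      (∀ (a b c : C) (i j : V),
        (∃ v, top v = a) → (∃ v, top v = b) → (∃ v, top v = c) →
        rank i a < rank i b → rank i a < rank i c →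
        rank j b < rank j a → rank j b < rank j c →
        ((f a < f b ∧ f b < f c) ∨ (f c < f b ∧ f b < f a)) → rank i b < rank i c)) := by
  constructor
  · rintro ⟨f, hf, hstp⟩
    refine ⟨f, hf, ?_, ?_⟩
    · rintro a b c i j hi hj (⟨h1, h2⟩ | ⟨h1, h2⟩)
      · exact (hstp a b c h1 h2 ⟨j, hj⟩ i).1 hi
      · exact (hstp c b a h1 h2 ⟨j, hj⟩ i).2 hi
    · rintro a b c i j ha hb hc hiab hiac hjba hjbc hord
      by_cases htb : top i = b
      · have hbc : b ≠ c := by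
          rintro rfl
          rcases hord with ⟨h1, h2⟩ | ⟨h1, h2⟩ <;> omega
        have := htop i c (by rw [htb]; exact hbc.symm)
        rwa [htb] at this
      · rcases hord with ⟨h1, h2⟩ | ⟨h1, h2⟩
        · rcases lt_or_gt_of_ne (fun h => htb (hf h)) with hlt | hgt
          · exact (hstp (top i) b c hlt h2 hb i).1 rfl
          · exact absurd hiab (not_lt_of_gt ((hstp a b (top i) h1 hgt hb i).2 rfl))
        · rcases lt_or_gt_of_ne (fun h => htb (hf h)) with hlt | hgt
          · exact absurd hiab (not_lt_of_gt ((hstp (top i) b a hlt h2 hb i).1 rfl))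
          · exact (hstp c b (top i) h1 hgt hb i).2 rfl
  · rintro ⟨f, hf, h1, h2⟩
    refine ⟨f, hf, ?_⟩
    rintro a b c hab hbc ⟨j, hj⟩ i
    constructor
    · intro hi
      exact h1 a b c i j hi hj (Or.inl ⟨hab, hbc⟩)
    · intro hi
      exact h1 c b a i j hi hj (Or.inr ⟨hab, hbc⟩)
end

section
/- In the strict-preferences model, an election is single-top-peaked if and only if it is single-top-crossing. -/
open Function

/-- Arithmetic helper: from `a * M + r ≤ b * M + s` with `s < M` we get `a ≤ b`. -/
private lemma stpstc_le {M a b r s : ℕ} (hs : s < M)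
    (h : a * M + r ≤ b * M + s) : a ≤ b := by
  by_contra hab
  push_neg at hab
  have h1 : (b + 1) * M ≤ a * M := Nat.mul_le_mul_right M hab
  have h2 : b * M + s < (b + 1) * M := by
    have : (b + 1) * M = b * M + M := by ring
    omega
  have h3 : b * M + s < a * M + r :=
    lt_of_lt_of_le (lt_of_lt_of_le h2 h1) (Nat.le_add_right _ _)
  exact absurd h (not_le.mpr h3)

section aux

variable {V C : Type*}

/-- the `g`-value of the first voter whose top is `c` (junk if none). -/
private noncomputable def stpstc_first (top : V → C) (g : V → ℕ) (c : C) : ℕ :=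
  sInf {n | ∃ v, top v = c ∧ g v = n}

/-- the `g`-value of the first voter `y` such that some earlier voter prefers
`a` to `top y`; equals `N` if no such voter exists. -/
private noncomputable def stpstc_q (rank : V → C → ℕ) (top : V → C) (g : V → ℕ)
    (N : ℕ) (a : C) : ℕ :=
  sInf ({n | ∃ y, g y = n ∧ ∃ x, g x < g y ∧ rank x a < rank x (top y)} ∪ {N})

open Classical in
/-- the coordinate of a candidate in the single-top-peaked order. -/
private noncomputable def stpstc_coord (rank : V → C → ℕ) (top : V → C) (g : V → ℕ)
    (N : ℕ) (c : C) : ℕ :=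
  if (∃ v, top v = c) then 2 * stpstc_first top g c else 2 * stpstc_q rank top g N c - 1

private lemma stpstc_first_le (top : V → C) (g : V → ℕ) {c : C} {v : V}
    (hv : top v = c) : stpstc_first top g c ≤ g v :=
  Nat.sInf_le ⟨v, hv, rfl⟩

private lemma stpstc_first_mem (top : V → C) (g : V → ℕ) {c : C}
    (h : ∃ v, top v = c) : ∃ v, top v = c ∧ g v = stpstc_first top g c := by
  obtain ⟨v, hv⟩ := h
  have hne : {n | ∃ v, top v = c ∧ g v = n}.Nonempty := ⟨g v, v, hv, rfl⟩
  exact Nat.sInf_mem hne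

private lemma stpstc_q_mem (rank : V → C → ℕ) (top : V → C) (g : V → ℕ)
    (N : ℕ) (a : C) :
    (∃ y, g y = stpstc_q rank top g N a ∧ ∃ x, g x < g y ∧ rank x a < rank x (top y)) ∨
      stpstc_q rank top g N a = N := by
  have h := Nat.sInf_mem
    (s := {n | ∃ y, g y = n ∧ ∃ x, g x < g y ∧ rank x a < rank x (top y)} ∪ {N})
    ⟨N, Or.inr rfl⟩
  rcases h with h | h
  · exact Or.inl h
  · exact Or.inr h

private lemma stpstc_q_le (rank : V → C → ℕ) (top : V → C) (g : V → ℕ)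
    (N : ℕ) (a : C) {x y : V} (hxy : g x < g y) (hr : rank x a < rank x (top y)) :
    stpstc_q rank top g N a ≤ g y :=
  Nat.sInf_le (Or.inl ⟨y, rfl, x, hxy, hr⟩)

private lemma stpstc_coord_top (rank : V → C → ℕ) (top : V → C) (g : V → ℕ)
    (N : ℕ) {c : C} (h : ∃ v, top v = c) :
    stpstc_coord rank top g N c = 2 * stpstc_first top g c := by
  rw [stpstc_coord, if_pos h]

private lemma stpstc_coord_nontop (rank : V → C → ℕ) (top : V → C) (g : V → ℕ)
    (N : ℕ) {c : C} (h : ¬ ∃ v, top v = c) :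
    stpstc_coord rank top g N c = 2 * stpstc_q rank top g N c - 1 := by
  rw [stpstc_coord, if_neg h]

end aux

/-- In the strict-preferences model, an election is single-top-peaked (STP)
iff it is single-top-crossing (STC). `rank v c` is the position of candidate
`c` in voter `v`'s linear order (lower = better), `top v` is `v`'s favourite. -/
theorem stp_iff_stc {V C : Type*} [Fintype V] [Fintype C]
    (rank : V → C → ℕ) (hinj : ∀ v, Injective (rank v))
    (top : V → C) (htop : ∀ v c, c ≠ top v → rank v (top v) < rank v c) :
    -- single-top-peaked
    (∃ f : C → ℕ, Injective f ∧ ∀ a b c : C, f a < f b → f b < f c →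
        (∃ j, top j = b) → ∀ i : V,
          (top i = a → rank i b < rank i c) ∧ (top i = c → rank i b < rank i a))
    ↔
    -- single-top-crossing
    (∃ g : V → ℕ, Injective g ∧ ∀ x y z : V, g x < g y → g y < g z →
        ∀ a : C, rank x a < rank x (top y) → rank z (top y) < rank z a) := by
  constructor
  · -- STP → STC : sort voters by `f ∘ top`, tie-broken injectively
    rintro ⟨f, hf, H⟩
    set M := Fintype.card V with hM
    set e : V → ℕ := fun v => ((Fintype.equivFin V) v : ℕ) with he
    have heM : ∀ v, e v < M := fun v => ((Fintype.equivFin V) v).isLt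
    have heinj : Injective e := fun v v' h =>
      (Fintype.equivFin V).injective (Fin.val_injective h)
    refine ⟨fun v => f (top v) * M + e v, ?_, ?_⟩
    · intro v v' h
      have h1 : f (top v) ≤ f (top v') := stpstc_le (heM v') h.le
      have h2 : f (top v') ≤ f (top v) := stpstc_le (heM v) h.ge
      have h3 : f (top v) = f (top v') := le_antisymm h1 h2
      apply heinj
      simp only at h
      rw [h3] at h
      exact Nat.add_left_cancel h
    · intro x y z hxy hyz a ha
      simp only at hxy hyz
      have hat : a ≠ top y := by
        intro h; rw [h] at ha; exact lt_irrefl _ ha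
      have h1 : f (top x) ≤ f (top y) := stpstc_le (heM y) hxy.le
      have h2 : f (top y) ≤ f (top z) := stpstc_le (heM z) hyz.le
      by_cases hzt : top z = top y
      · have := htop z a (by rw [hzt]; exact hat)
        rwa [hzt] at this
      · have hxt : top x ≠ top y := by
          intro h
          have := htop x a (by rw [h]; exact hat)
          rw [h] at this
          exact absurd ha (lt_asymm this)
        have h1' : f (top x) < f (top y) := lt_of_le_of_ne h1 (fun h => hxt (hf h))
        have h2' : f (top y) < f (top z) := lt_of_le_of_ne h2 (fun h => hzt (hf h).symm)
        rcases lt_trichotomy (f a) (f (top y)) with hfa | hfa | hfa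
        · exact (H a (top y) (top z) hfa h2' ⟨y, rfl⟩ z).2 rfl
        · exact absurd (hf hfa) hat
        · have := (H (top x) (top y) a h1' hfa ⟨y, rfl⟩ x).1 rfl
          exact absurd ha (lt_asymm this)
  · -- STC → STP
    rintro ⟨g, hginj, H⟩
    classical
    set N := (Finset.univ : Finset V).sup g + 1 with hN
    have hgN : ∀ v, g v < N := fun v => by
      have := Finset.le_sup (f := g) (Finset.mem_univ v); omega
    set M := Fintype.card C with hM
    set e : C → ℕ := fun c => ((Fintype.equivFin C) c : ℕ) with he
    have heM : ∀ c, e c < M := fun c => ((Fintype.equivFin C) c).isLt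
    have heinj : Injective e := fun c c' h =>
      (Fintype.equivFin C).injective (Fin.val_injective h)
    set co := stpstc_coord rank top g N with hco
    have hq1 : ∀ a : C, 1 ≤ stpstc_q rank top g N a := by
      intro a
      rcases stpstc_q_mem rank top g N a with ⟨y, hy, x, hxy, _⟩ | h
      · omega
      · omega
    refine ⟨fun c => co c * M + e c, ?_, ?_⟩
    · intro c c' h
      have h1 : co c ≤ co c' := stpstc_le (heM c') h.le
      have h2 : co c' ≤ co c := stpstc_le (heM c) h.ge
      have h3 : co c = co c' := le_antisymm h1 h2
      apply heinj
      simp only at h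
      rw [h3] at h
      exact Nat.add_left_cancel h
    · intro a b c hab hbc hbT i
      simp only at hab hbc
      have hcob : co b = 2 * stpstc_first top g b := stpstc_coord_top rank top g N hbT
      obtain ⟨yb, hybt, hybg⟩ := stpstc_first_mem top g hbT
      have h1 : co a ≤ co b := stpstc_le (heM b) hab.le
      have h2 : co b ≤ co c := stpstc_le (heM c) hbc.le
      have hne_ab : a ≠ b := by rintro rfl; exact lt_irrefl _ hab
      have hne_bc : b ≠ c := by rintro rfl; exact lt_irrefl _ hbc
      constructor
      · -- voters whose top is `a` prefer `b` to `c`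
        intro hia
        have haT : ∃ v, top v = a := ⟨i, hia⟩
        have hcoa : co a = 2 * stpstc_first top g a := stpstc_coord_top rank top g N haT
        obtain ⟨ya, hyat, hyag⟩ := stpstc_first_mem top g haT
        have hfab : stpstc_first top g a < stpstc_first top g b := by
          have hle : stpstc_first top g a ≤ stpstc_first top g b := by omega
          rcases lt_or_eq_of_le hle with h | h
          · exact h
          · exfalso
            have : ya = yb := hginj (by rw [hyag, hybg, h])
            rw [this, hybt] at hyat
            exact hne_ab hyat.symm
        -- all voters with top `a` precede `yb`
        have hgi_lt : g i < g yb := by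
          rcases lt_trichotomy (g i) (g yb) with h | h | h
          · exact h
          · exfalso
            have : i = yb := hginj h
            rw [this, hybt] at hia
            exact hne_ab hia.symm
          · exfalso
            have hya_yb : g ya < g yb := by omega
            have hr : rank ya a < rank ya (top yb) := by
              rw [hybt]
              have := htop ya b (by rw [hyat]; exact hne_ab.symm)
              rwa [hyat] at this
            have hcon := H ya yb i hya_yb h a hr
            rw [hybt] at hcon
            have hmin := htop i b (by rw [hia]; exact hne_ab.symm)
            rw [hia] at hmin
            omega
        by_cases hcT : ∃ v, top v = c
        · have hcoc : co c = 2 * stpstc_first top g c := stpstc_coord_top rank top g N hcT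
          obtain ⟨zc, hzct, hzcg⟩ := stpstc_first_mem top g hcT
          have hfbc : stpstc_first top g b < stpstc_first top g c := by
            have hle : stpstc_first top g b ≤ stpstc_first top g c := by omega
            rcases lt_or_eq_of_le hle with h | h
            · exact h
            · exfalso
              have : yb = zc := hginj (by rw [hybg, hzcg, h])
              rw [this, hzct] at hybt
              exact hne_bc hybt.symm
          have hyb_zc : g yb < g zc := by omega
          by_contra hgoal
          have hne : rank i b ≠ rank i c := fun h => hne_bc (hinj i h)
          have hci : rank i c < rank i b := by omega
          have hcon := H i yb zc hgi_lt hyb_zc c (by rw [hybt]; exact hci)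
          rw [hybt] at hcon
          have hmin := htop zc b (by rw [hzct]; exact hne_bc)
          rw [hzct] at hmin
          omega
        · have hcoc : co c = 2 * stpstc_q rank top g N c - 1 :=
            stpstc_coord_nontop rank top g N hcT
          have hqc : stpstc_first top g b < stpstc_q rank top g N c := by
            have := hq1 c; omega
          by_contra hgoal
          have hne : rank i b ≠ rank i c := fun h => hne_bc (hinj i h)
          have hci : rank i c < rank i b := by omega
          have hle : stpstc_q rank top g N c ≤ g yb :=
            stpstc_q_le rank top g N c hgi_lt (by rw [hybt]; exact hci)
          omega
      · -- voters whose top is `c` prefer `b` to `a`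
        intro hic
        have hcT : ∃ v, top v = c := ⟨i, hic⟩
        have hcoc : co c = 2 * stpstc_first top g c := stpstc_coord_top rank top g N hcT
        obtain ⟨zc, hzct, hzcg⟩ := stpstc_first_mem top g hcT
        have hfbc : stpstc_first top g b < stpstc_first top g c := by
          have hle : stpstc_first top g b ≤ stpstc_first top g c := by omega
          rcases lt_or_eq_of_le hle with h | h
          · exact h
          · exfalso
            have : yb = zc := hginj (by rw [hybg, hzcg, h])
            rw [this, hzct] at hybt
            exact hne_bc hybt.symm
        have hyb_i : g yb < g i := by
          have := stpstc_first_le top g (c := c) hic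
          omega
        by_cases haT : ∃ v, top v = a
        · have hcoa : co a = 2 * stpstc_first top g a := stpstc_coord_top rank top g N haT
          obtain ⟨ya, hyat, hyag⟩ := stpstc_first_mem top g haT
          have hfab : stpstc_first top g a < stpstc_first top g b := by
            have hle : stpstc_first top g a ≤ stpstc_first top g b := by omega
            rcases lt_or_eq_of_le hle with h | h
            · exact h
            · exfalso
              have : ya = yb := hginj (by rw [hyag, hybg, h])
              rw [this, hybt] at hyat
              exact hne_ab hyat.symm
          have hya_yb : g ya < g yb := by omega
          have hr : rank ya a < rank ya (top yb) := by
            rw [hybt]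
            have := htop ya b (by rw [hyat]; exact hne_ab.symm)
            rwa [hyat] at this
          have hcon := H ya yb i hya_yb hyb_i a hr
          rwa [hybt] at hcon
        · have hcoa : co a = 2 * stpstc_q rank top g N a - 1 :=
            stpstc_coord_nontop rank top g N haT
          have hqa : stpstc_q rank top g N a ≤ stpstc_first top g b := by
            have := hq1 a; omega
          rcases stpstc_q_mem rank top g N a with ⟨y0, hy0, x0, hx0y0, hx0r⟩ | hqN
          · have hx0b : rank x0 a < rank x0 b := by
              by_cases h' : top y0 = b
              · rwa [h'] at hx0r
              · have hy0_yb : g y0 < g yb := by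
                  rcases lt_or_eq_of_le (by omega : g y0 ≤ g yb) with h | h
                  · exact h
                  · exact absurd (by rw [hginj h, hybt]) h'
                have hstep : rank x0 (top y0) < rank x0 b := by
                  by_contra h''
                  have hne : rank x0 b ≠ rank x0 (top y0) := fun h =>
                    h' ((hinj x0 h).symm)
                  have hlt : rank x0 b < rank x0 (top y0) := by omega
                  have hcon := H x0 y0 yb hx0y0 hy0_yb b hlt
                  have hmin := htop yb (top y0) (by rw [hybt]; exact h')
                  rw [hybt] at hmin
                  omega
                exact lt_trans hx0r hstep
            have hx0_yb : g x0 < g yb := by omega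
            have hcon := H x0 yb i hx0_yb hyb_i a (by rw [hybt]; exact hx0b)
            rwa [hybt] at hcon
          · exfalso
            have := hgN yb
            omega
end

section
/- Every voter-interval (VI) approval election is linearly consistent (LC). -/
open Function

/-- Every voter-interval (VI) approval election is linearly consistent (LC).
`app v c` means voter `v` approves candidate `c`. -/
theorem vi_implies_lc {V C : Type*} [Fintype V] [Fintype C]
    (app : V → C → Prop)
    (hVI : ∃ g : V → ℕ, Injective g ∧ ∀ (v1 v2 v3 : V) (c : C),
      g v1 < g v2 → g v2 < g v3 → app v1 c → app v3 c → app v2 c) :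
    ∃ f : V ⊕ C → ℕ, Injective f ∧ ∀ (i j : V) (a b : C),
      f (Sum.inl i) < f (Sum.inl j) → f (Sum.inr a) < f (Sum.inr b) →
      app i b → app j a → app i a := by
  classical
  obtain ⟨g, hg, hVIp⟩ := hVI
  set n := Fintype.card C with hn
  let k : C → ℕ := fun c => (Fintype.equivFin C c : ℕ)
  have hk_lt : ∀ c, k c < n := fun c => (Fintype.equivFin C c).2
  have hk_inj : Injective k := fun a b h =>
    (Fintype.equivFin C).injective (Fin.ext h)
  let l : C → ℕ := fun c => sInf {m | ∃ v, app v c ∧ g v = m}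
  have hl_le : ∀ {v : V} {c : C}, app v c → l c ≤ g v := fun {v c} h =>
    Nat.sInf_le ⟨v, h, rfl⟩
  have hl_mem : ∀ {c : C} (v : V), app v c → ∃ w, app w c ∧ g w = l c := by
    intro c v h
    exact Nat.sInf_mem (⟨g v, v, h, rfl⟩ : {m | ∃ v, app v c ∧ g v = m}.Nonempty)
  refine ⟨fun x => match x with
    | Sum.inl v => 2 * g v
    | Sum.inr c => 2 * (l c * n + k c) + 1, ?_, ?_⟩
  · intro x y hxy
    match x, y with
    | Sum.inl v, Sum.inl w =>
      simp only at hxy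
      exact congrArg Sum.inl (hg (by omega))
    | Sum.inl v, Sum.inr c => simp only at hxy; omega
    | Sum.inr c, Sum.inl v => simp only at hxy; omega
    | Sum.inr a, Sum.inr b =>
      simp only at hxy
      have heq : l a * n + k a = l b * n + k b := by omega
      have hnpos : 0 < n := (hk_lt a).trans_le' (Nat.zero_le _) |>.trans_le (le_refl n)
      have hka : (k a + l a * n) % n = k a := by
        rw [Nat.add_mul_mod_self_right, Nat.mod_eq_of_lt (hk_lt a)]
      have hkb : (k b + l b * n) % n = k b := by
        rw [Nat.add_mul_mod_self_right, Nat.mod_eq_of_lt (hk_lt b)]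
      have hkab : k a = k b := by
        rw [← hka, ← hkb]
        congr 1
        omega
      exact congrArg Sum.inr (hk_inj hkab)
  · intro i j a b hij hab hib hja
    simp only at hij hab
    have hij' : g i < g j := by omega
    have hab' : l a * n + k a < l b * n + k b := by omega
    have hla : l a ≤ l b := by
      by_contra h
      push_neg at h
      have : (l b + 1) * n ≤ l a * n := Nat.mul_le_mul_right n h
      have := hk_lt b
      nlinarith
    have hli : l a ≤ g i := hla.trans (hl_le hib)
    obtain ⟨w, hwa, hwl⟩ := hl_mem j hja
    rcases lt_or_eq_of_le (hwl ▸ hli : g w ≤ g i) with hlt | heq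
    · exact hVIp w i j a hlt hij' hwa hja
    · rw [hg heq] at hwa; exact hwa
end

section
/- Every candidate-interval (CI) approval election is linearly consistent (LC). -/
open Function

lemma ci_key {n a b x y : ℕ} (hx : x < n) (hy : y < n)
    (h : a * n + x = b * n + y) : a = b ∧ x = y := by
  rcases lt_trichotomy a b with h' | h' | h'
  · exfalso
    have : a * n + x < b * n + y := by
      calc a * n + x < a * n + n := by omega
        _ = (a + 1) * n := by ring
        _ ≤ b * n := Nat.mul_le_mul_right _ h'
        _ ≤ b * n + y := by omega
    omega
  · subst h'; omega
  · exfalso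
    have : b * n + y < a * n + x := by
      calc b * n + y < b * n + n := by omega
        _ = (b + 1) * n := by ring
        _ ≤ a * n := Nat.mul_le_mul_right _ h'
        _ ≤ a * n + x := by omega
    omega

/-- Every candidate-interval (CI) approval election is linearly consistent (LC).
`app v c` means voter `v` approves candidate `c`. -/
theorem ci_implies_lc {V C : Type*} [Fintype V] [Fintype C]
    (app : V → C → Prop)
    (hCI : ∃ g : C → ℕ, Injective g ∧ ∀ (i : V) (a b c : C),
      g a < g b → g b < g c → app i a → app i c → app i b) :
    ∃ f : V ⊕ C → ℕ, Injective f ∧ ∀ (i j : V) (a b : C),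
      f (Sum.inl i) < f (Sum.inl j) → f (Sum.inr a) < f (Sum.inr b) →
      app i b → app j a → app i a := by
  classical
  obtain ⟨g, hg, hCI⟩ := hCI
  set n := Fintype.card V with hn
  set e : V → ℕ := fun v => ((Fintype.equivFin V) v : ℕ) with he_def
  have he : Injective e := fun a b h =>
    (Fintype.equivFin V).injective (Fin.ext h)
  have hen : ∀ v, e v < n := fun v => ((Fintype.equivFin V) v).2
  set L : V → ℕ := fun i => sInf (g '' {c | app i c}) with hL
  refine ⟨Sum.elim (fun i => 2 * (L i * n + e i) + 1) (fun c => 2 * g c), ?_, ?_⟩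
  · intro x y hxy
    match x, y with
    | Sum.inl i, Sum.inl j =>
      simp only [Sum.elim_inl] at hxy
      have h1 : L i * n + e i = L j * n + e j := by omega
      obtain ⟨_, h2⟩ := ci_key (hen i) (hen j) h1
      exact congrArg Sum.inl (he h2)
    | Sum.inl i, Sum.inr c => simp only [Sum.elim_inl, Sum.elim_inr] at hxy; omega
    | Sum.inr c, Sum.inl i => simp only [Sum.elim_inl, Sum.elim_inr] at hxy; omega
    | Sum.inr c, Sum.inr d =>
      simp only [Sum.elim_inr] at hxy
      exact congrArg Sum.inr (hg (by omega))
  · intro i j a b hij hab hib hja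
    simp only [Sum.elim_inl, Sum.elim_inr] at hij hab
    have hab' : g a < g b := by omega
    have hLij : L i ≤ L j := by
      by_contra hlt
      push_neg at hlt
      have : L j * n + e j < L i * n + e i := by
        calc L j * n + e j < L j * n + n := by have := hen j; omega
          _ = (L j + 1) * n := by ring
          _ ≤ L i * n := Nat.mul_le_mul_right _ hlt
          _ ≤ L i * n + e i := by omega
      omega
    have hLja : L j ≤ g a := Nat.sInf_le ⟨a, hja, rfl⟩
    have hne : (g '' {c | app i c}).Nonempty := ⟨g b, b, hib, rfl⟩
    obtain ⟨c0, hc0, hgc0⟩ := Nat.sInf_mem hne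
    have hgc0' : g c0 = L i := hgc0
    have hc0a : g c0 ≤ g a := by omega
    rcases eq_or_lt_of_le hc0a with heq | hlt
    · rwa [← hg heq]
    · exact hCI i c0 a b hlt hab' hc0 hib
end

section
/- Every linearly consistent (LC) approval election is seemingly single-crossing (SSC). -/
open Function

/-- Every linearly consistent (LC) approval election is seemingly single-crossing (SSC). -/
theorem lc_implies_ssc {V C : Type*} [Fintype V] [Fintype C]
    (app : V → C → Prop)
    (hLC : ∃ f : V ⊕ C → ℕ, Injective f ∧ ∀ (i j : V) (a b : C),
      f (Sum.inl i) < f (Sum.inl j) → f (Sum.inr a) < f (Sum.inr b) →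
      app i b → app j a → app i a) :
    ∃ g : V → ℕ, Injective g ∧ ∀ a b : C,
      (∀ i j : V, app i a → ¬ app i b → app j b → ¬ app j a → g i < g j) ∨
      (∀ i j : V, app i a → ¬ app i b → app j b → ¬ app j a → g j < g i) := by
  obtain ⟨f, hfinj, hf⟩ := hLC
  refine ⟨fun i => f (Sum.inl i), fun i j h => by cases hfinj h; rfl, ?_⟩
  intro a b
  rcases lt_trichotomy (f (Sum.inr a)) (f (Sum.inr b)) with hab | hab | hab
  · left
    intro i j hia hib hjb hja
    rcases lt_trichotomy (f (Sum.inl i)) (f (Sum.inl j)) with h | h | h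
    · exact h
    · cases hfinj h; exact absurd hjb hib
    · exact absurd (hf j i a b h hab hjb hia) hja
  · right
    intro i j hia hib hjb hja
    have : a = b := by have := hfinj hab; simpa using this
    exact absurd (this ▸ hia) hib
  · right
    intro i j hia hib hjb hja
    rcases lt_trichotomy (f (Sum.inl j)) (f (Sum.inl i)) with h | h | h
    · exact h
    · cases hfinj h; exact absurd hjb hib
    · exact absurd (hf i j b a h hab hia hjb) hib
end

section
/- There exists a seemingly single-crossing approval election that is not linearly consistent: namely the election with three voters v1, v2, v3 and three candidates a, b, c, where v1 approves {a, c}, v2 approves {a, b}, and v3 approves {b, c}, is SSC but not LC. -/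
open Function

/-- The approval election with voters `v0, v1, v2` (elements of `Fin 3`) and
candidates `a = 0`, `b = 1`, `c = 2` (elements of `Fin 3`), where
`v0` approves `{a, c}`, `v1` approves `{a, b}` and `v2` approves `{b, c}`:
voter `i` approves candidate `x` iff `x ≠ v + 1`. -/
def app5 (v x : Fin 3) : Prop := x ≠ v + 1

/-- This election is seemingly single-crossing (SSC) but not linearly consistent (LC). -/
theorem ssc_not_lc :
    (∃ g : Fin 3 → ℕ, Injective g ∧ ∀ a b : Fin 3,
      (∀ i j : Fin 3, app5 i a → ¬ app5 i b → app5 j b → ¬ app5 j a → g i < g j) ∨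
      (∀ i j : Fin 3, app5 i a → ¬ app5 i b → app5 j b → ¬ app5 j a → g j < g i)) ∧
    ¬ (∃ f : Fin 3 ⊕ Fin 3 → ℕ, Injective f ∧ ∀ (i j a b : Fin 3),
      f (Sum.inl i) < f (Sum.inl j) → f (Sum.inr a) < f (Sum.inr b) →
      app5 i b → app5 j a → app5 i a) := by
  constructor
  · refine ⟨fun i => i.val, fun x y h => Fin.val_injective h, ?_⟩
    unfold app5
    beta_reduce
    intro a b
    fin_cases a <;> fin_cases b <;> first | (left; decide) | (right; decide)
  · rintro ⟨f, hf, h⟩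
    -- key: if voter i is not f-maximal, then candidate i+1 dominates all others
    have key : ∀ i i' b : Fin 3, f (Sum.inl i) < f (Sum.inl i') → b ≠ i + 1 →
        f (Sum.inr b) < f (Sum.inr (i + 1)) := by
      intro i i' b hii hb
      have hne : i ≠ i' := by rintro rfl; exact lt_irrefl _ hii
      rcases lt_or_gt_of_ne (fun e : f (Sum.inr (i+1)) = f (Sum.inr b) =>
        hb (Sum.inr.inj (hf e)).symm) with hlt | hgt
      · exact absurd rfl (h i i' (i + 1) b hii hlt hb (fun e => hne (add_right_cancel e)))
      · exact hgt
    have main : ∀ i j : Fin 3, i ≠ j →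
        (∃ i', f (Sum.inl i) < f (Sum.inl i')) →
        (∃ j', f (Sum.inl j) < f (Sum.inl j')) → False := by
      rintro i j hij ⟨i', hi⟩ ⟨j', hj⟩
      have h1 : f (Sum.inr (j + 1)) < f (Sum.inr (i + 1)) :=
        key i i' (j + 1) hi (fun e => hij (add_right_cancel e).symm)
      have h2 : f (Sum.inr (i + 1)) < f (Sum.inr (j + 1)) :=
        key j j' (i + 1) hj (fun e => hij (add_right_cancel e))
      exact lt_asymm h1 h2
    have ne01 : (0 : Fin 3) ≠ 1 := by decide
    have ne02 : (0 : Fin 3) ≠ 2 := by decide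
    have ne12 : (1 : Fin 3) ≠ 2 := by decide
    have tri : ∀ x y : Fin 3, x ≠ y →
        f (Sum.inl x) < f (Sum.inl y) ∨ f (Sum.inl y) < f (Sum.inl x) :=
      fun x y hxy => lt_or_gt_of_ne (fun e => hxy (Sum.inl.inj (hf e)))
    rcases tri 0 1 ne01 with h01 | h10
    · rcases tri 1 2 ne12 with h12 | h21
      · exact main 0 1 ne01 ⟨1, h01⟩ ⟨2, h12⟩
      · exact main 0 2 ne02 ⟨1, h01⟩ ⟨1, h21⟩
    · rcases tri 0 2 ne02 with h02 | h20
      · exact main 1 0 ne01.symm ⟨0, h10⟩ ⟨2, h02⟩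
      · exact main 1 2 ne12 ⟨0, h10⟩ ⟨0, h20⟩
end

section
/- Consider the 1D-Euclidean election with candidates a, b, c, d, e at positions 0, 3, 6, 9, 12 and voters v1, v2, v3, v4 at positions 2, 5, 7, 10, where each voter ranks candidates by increasing distance, and committee size k = 2. The committee {b, d} (which is elected by the Monroe rule) does not belong to the core: the coalition S = {v2, v3} with T = {c} witnesses the core violation. -/
open Function Finset

/-- Positions of the candidates `a,b,c,d,e` (as `0,1,2,3,4 : Fin 5`). -/
noncomputable def cpos6 : Fin 5 → ℝ := ![0, 3, 6, 9, 12]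

/-- Positions of the voters `v1,v2,v3,v4` (as `0,1,2,3 : Fin 4`). -/
noncomputable def vpos6 : Fin 4 → ℝ := ![2, 5, 7, 10]

open scoped Classical in
/-- The rank (position, 0-indexed) of candidate `c` in voter `v`'s 1D-Euclidean
preference order: the number of candidates strictly closer to `v`. -/
noncomputable def rk6 (v : Fin 4) (c : Fin 5) : ℕ :=
  (Finset.univ.filter (fun d => |vpos6 v - cpos6 d| < |vpos6 v - cpos6 c|)).card

open scoped Classical in
/-- `A` is lexicographically strictly preferred to `B` by a voter with ranking `rk`. -/
def LexPref (rk : Fin 5 → ℕ) (A B : Finset (Fin 5)) : Prop :=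
  ∃ σ : ℕ, (B.filter (fun c => rk c = σ)).card < (A.filter (fun c => rk c = σ)).card ∧
    ∀ ρ < σ, (A.filter (fun c => rk c = ρ)).card = (B.filter (fun c => rk c = ρ)).card

lemma rk6_12 : rk6 1 2 = 0 := by
  unfold rk6
  rw [show (univ : Finset (Fin 5)) = {0,1,2,3,4} from rfl]
  norm_num [vpos6, cpos6, Finset.filter_insert, abs_sub_lt_iff,
    Finset.filter_singleton, Matrix.cons_val_four, Matrix.cons_val_two,
    Matrix.cons_val_three, Matrix.vecHead, Matrix.vecTail]

lemma rk6_11 : rk6 1 1 = 1 := by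
  unfold rk6
  rw [show (univ : Finset (Fin 5)) = {0,1,2,3,4} from rfl]
  norm_num [vpos6, cpos6, Finset.filter_insert, abs_sub_lt_iff,
    Finset.filter_singleton, Matrix.cons_val_four, Matrix.cons_val_two,
    Matrix.cons_val_three, Matrix.vecHead, Matrix.vecTail]

lemma rk6_13 : rk6 1 3 = 2 := by
  unfold rk6
  rw [show (univ : Finset (Fin 5)) = {0,1,2,3,4} from rfl]
  norm_num [vpos6, cpos6, Finset.filter_insert, abs_sub_lt_iff,
    Finset.filter_singleton, Matrix.cons_val_four, Matrix.cons_val_two,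
    Matrix.cons_val_three, Matrix.vecHead, Matrix.vecTail]
  decide

lemma rk6_22 : rk6 2 2 = 0 := by
  unfold rk6
  rw [show (univ : Finset (Fin 5)) = {0,1,2,3,4} from rfl]
  norm_num [vpos6, cpos6, Finset.filter_insert, abs_sub_lt_iff,
    Finset.filter_singleton, Matrix.cons_val_four, Matrix.cons_val_two,
    Matrix.cons_val_three, Matrix.vecHead, Matrix.vecTail]

lemma rk6_21 : rk6 2 1 = 2 := by
  unfold rk6
  rw [show (univ : Finset (Fin 5)) = {0,1,2,3,4} from rfl]
  norm_num [vpos6, cpos6, Finset.filter_insert, abs_sub_lt_iff,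
    Finset.filter_singleton, Matrix.cons_val_four, Matrix.cons_val_two,
    Matrix.cons_val_three, Matrix.vecHead, Matrix.vecTail]
  decide

lemma rk6_23 : rk6 2 3 = 1 := by
  unfold rk6
  rw [show (univ : Finset (Fin 5)) = {0,1,2,3,4} from rfl]
  norm_num [vpos6, cpos6, Finset.filter_insert, abs_sub_lt_iff,
    Finset.filter_singleton, Matrix.cons_val_four, Matrix.cons_val_two,
    Matrix.cons_val_three, Matrix.vecHead, Matrix.vecTail]

lemma lex1 : LexPref (rk6 1) {2} {1, 3} := by
  refine ⟨0, ?_, fun ρ hρ => absurd hρ (Nat.not_lt_zero ρ)⟩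
  rw [show ({1,3} : Finset (Fin 5)).filter (fun c => rk6 1 c = 0) = ∅ by
      simp [Finset.filter_insert, Finset.filter_singleton, rk6_11, rk6_13],
    show ({2} : Finset (Fin 5)).filter (fun c => rk6 1 c = 0) = {2} by
      simp [Finset.filter_singleton, rk6_12]]
  simp

lemma lex2 : LexPref (rk6 2) {2} {1, 3} := by
  refine ⟨0, ?_, fun ρ hρ => absurd hρ (Nat.not_lt_zero ρ)⟩
  rw [show ({1,3} : Finset (Fin 5)).filter (fun c => rk6 2 c = 0) = ∅ by
      simp [Finset.filter_insert, Finset.filter_singleton, rk6_21, rk6_23],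
    show ({2} : Finset (Fin 5)).filter (fun c => rk6 2 c = 0) = {2} by
      simp [Finset.filter_singleton, rk6_22]]
  simp

/-- In the 1D-Euclidean election above with `k = 2`, the committee `{b, d}`
(elected by the Monroe rule) is not in the core: the coalition `S = {v2, v3}`
with `T = {c}` witnesses the core violation. -/
theorem monroe_not_core :
    (({2} : Finset (Fin 5)).card * 4 ≤ 2 * ({1, 2} : Finset (Fin 4)).card) ∧
    (∀ i ∈ ({1, 2} : Finset (Fin 4)), LexPref (rk6 i) {2} {1, 3}) ∧
    ¬ (∀ (S : Finset (Fin 4)) (T : Finset (Fin 5)), T.card * 4 ≤ 2 * S.card →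
        ∃ i ∈ S, ¬ LexPref (rk6 i) T ({1, 3} : Finset (Fin 5))) := by
  refine ⟨by decide, ?_, ?_⟩
  · intro i hi
    fin_cases hi
    · exact lex1
    · exact lex2
  · intro h
    obtain ⟨i, hi, hni⟩ := h {1, 2} {2} (by decide)
    fin_cases hi
    · exact hni lex1
    · exact hni lex2
end

section
/- Every 1D-Euclidean election with strict preferences is recursive single-top-crossing (r-STC). -/
open Function Finset

lemma key_cross (p q t1 t2 t3 : ℝ) (h12 : t1 ≤ t2) (h23 : t2 ≤ t3)
    (h1 : |t1 - p| < |t1 - q|) (h2 : |t2 - q| < |t2 - p|) :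
    |t3 - q| < |t3 - p| := by
  rw [← sq_lt_sq] at h1 h2 ⊢
  nlinarith [sq_nonneg (t1 - t2), sq_nonneg (p - q), mul_nonneg (sub_nonneg.2 h12) (sub_nonneg.2 h23)]

/-- Every 1D-Euclidean election with strict preferences is recursive
single-top-crossing (r-STC): for every subset `D` of candidates kept
(i.e. every subinstance obtained by removing candidates), the subinstance is
single-top-crossing. Voter `i` sits at `x i`, candidate `c` at `y c`, and
`a ≻_i b` iff `|x i - y a| < |x i - y b|`; all distances from a fixed voter
are pairwise distinct. -/
theorem euclidean_implies_rstc {V C : Type*} [Fintype V] [Fintype C]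
    (x : V → ℝ) (y : C → ℝ)
    (hdist : ∀ (i : V) (a b : C), a ≠ b → |x i - y a| ≠ |x i - y b|) :
    ∀ D : Finset C, D.Nonempty → ∃ g : V → ℕ, Injective g ∧
      ∀ v1 v2 v3 : V, g v1 < g v2 → g v2 < g v3 →
        ∀ a ∈ D, ∀ ty ∈ D,
          (∀ c ∈ D, c ≠ ty → |x v2 - y ty| < |x v2 - y c|) →
          |x v1 - y a| < |x v1 - y ty| → |x v3 - y ty| < |x v3 - y a| := by
  classical
  intro D _hD
  letI e := Fintype.equivFin V
  letI k : V → ℝ ×ₗ ℕ := fun v => toLex (x v, e v)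
  have hk : Injective k := by
    intro u v h
    have h2 : ((e u : ℕ)) = (e v : ℕ) := congrArg (fun p => (ofLex p).2) h
    exact e.injective (Fin.val_injective h2)
  letI : LinearOrder V := LinearOrder.lift' k hk
  have hmono : ∀ u v : V, u < v → x u ≤ x v := by
    intro u v huv
    have : k u < k v := huv
    rcases Prod.Lex.lt_iff.1 this with h | h
    · exact le_of_lt h
    · exact le_of_eq h.1
  let iso := Fintype.orderIsoFinOfCardEq V rfl
  refine ⟨fun v => (iso.symm v : ℕ), fun u v h => iso.symm.injective (Fin.val_injective h), ?_⟩
  intro v1 v2 v3 h12 h23 a ha ty hty htop h1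
  have hlt12 : v1 < v2 := iso.symm.lt_iff_lt.1 (Fin.lt_iff_val_lt_val.2 h12)
  have hlt23 : v2 < v3 := iso.symm.lt_iff_lt.1 (Fin.lt_iff_val_lt_val.2 h23)
  have hne : a ≠ ty := by
    rintro rfl; exact lt_irrefl _ h1
  have h2 : |x v2 - y ty| < |x v2 - y a| := htop a ha hne
  exact key_cross (y a) (y ty) (x v1) (x v2) (x v3) (hmono _ _ hlt12) (hmono _ _ hlt23) h1 h2
end
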